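/- Let α > −1 and n ∈ ℕ with n ≥ 4, and suppose L_{n−1}^{(α+4)} and L_n^{(α)} have no common zeros. Let 0 < x_1 < ⋯ < x_n be the zeros of L_n^{(α)}, let 0 < X_1 < ⋯ < X_{n−1} be the zeros of L_{n−1}^{(α+4)}, and let q_+ be the (unique) positive root of the quadratic equation n·x² + 2n(α+2)·x − (α+1)(α+2)(α+3) = 0. If q_+ < x_1 or q_+ > x_n, then the zeros of L_{n−1}^{(α+4)} interlace with the zeros of L_n^{(α)}: x_1 < X_1 < x_2 < X_2 < ⋯ < X_{n−1} < x_n. -/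

import Mathlib

open Polynomial

/-- The generalized Laguerre polynomial `L_n^{(α)}(x) =
∑_{k=0}^{n} (−1)^k [∏_{j=k+1}^{n}(α+j)] / ((n−k)!·k!) · x^k`. -/
noncomputable def laguerre (α : ℝ) (n : ℕ) : Polynomial ℝ :=
  ∑ k ∈ Finset.range (n + 1),
    Polynomial.C ((-1 : ℝ) ^ k * (∏ j ∈ Finset.Icc (k + 1) n, (α + (j : ℝ))) /
      ((n - k).factorial * k.factorial)) * Polynomial.X ^ k

lemma laguerre_coeff (α : ℝ) (n k : ℕ) :
    (laguerre α n).coeff k = if k ≤ n then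
      (-1 : ℝ) ^ k * (∏ j ∈ Finset.Icc (k + 1) n, (α + (j : ℝ))) /
      ((n - k).factorial * k.factorial) else 0 := by
  rw [laguerre, Polynomial.finset_sum_coeff]
  simp only [Polynomial.coeff_C_mul, Polynomial.coeff_X_pow]
  by_cases h : k ≤ n
  · rw [Finset.sum_eq_single k]
    · simp [h]
    · intro b _ hb; simp [hb.symm]
    · intro hk; exact absurd (Finset.mem_range.mpr (Nat.lt_succ_of_le h)) hk
  · rw [if_neg h, Finset.sum_eq_zero]
    intro b hb
    have : ¬ (k = b) := by simp at hb; omega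
    simp [this]

lemma prod_shift (a b : ℕ) (α : ℝ) :
    ∏ j ∈ Finset.Icc (a + 1) (b + 1), (α + (j : ℝ)) =
    ∏ j ∈ Finset.Icc a b, (α + 1 + (j : ℝ)) := by
  rw [← Finset.map_add_right_Icc a b 1, Finset.prod_map]
  apply Finset.prod_congr rfl
  intro j _
  simp [addRightEmbedding]
  push_cast
  ring


lemma lemR1 (α : ℝ) (m : ℕ) :
    laguerre (α + 1) (m + 1) = laguerre α (m + 1) + laguerre (α + 1) m := by
  ext k
  rw [Polynomial.coeff_add, laguerre_coeff, laguerre_coeff, laguerre_coeff]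
  by_cases h : k ≤ m
  · rw [if_pos (by omega), if_pos (by omega), if_pos h]
    have e1 : ∏ j ∈ Finset.Icc (k + 1) (m + 1), (α + 1 + (j : ℝ))
        = (α + 1 + (m + 1 : ℕ)) * ∏ j ∈ Finset.Icc (k + 1) m, (α + 1 + (j : ℝ)) := by
      rw [Finset.prod_Icc_succ_top (by omega)]; ring
    have e2 : ∏ j ∈ Finset.Icc (k + 1) (m + 1), (α + (j : ℝ))
        = (α + (k + 1 : ℕ)) * ∏ j ∈ Finset.Icc (k + 2) (m + 1), (α + (j : ℝ)) := by
      rw [← Finset.insert_Icc_add_one_left_eq_Icc (by omega : k + 1 ≤ m + 1), Finset.prod_insert (by simp)]; rfl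
    have e3 : ∏ j ∈ Finset.Icc (k + 2) (m + 1), (α + (j : ℝ))
        = ∏ j ∈ Finset.Icc (k + 1) m, (α + 1 + (j : ℝ)) := prod_shift _ _ _
    rw [e1, e2, e3]
    have hf : (m + 1 - k) = (m - k) + 1 := by omega
    rw [hf, Nat.factorial_succ]
    have h1 : ((m - k : ℕ) : ℝ) = (m : ℝ) - k := by
      rw [Nat.cast_sub h]
    have hk0 : (Nat.factorial k : ℝ) ≠ 0 := by positivity
    have hmk0 : (Nat.factorial (m - k) : ℝ) ≠ 0 := by positivity
    have hden : (m : ℝ) - k + 1 ≠ 0 := by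
      have : (k : ℝ) ≤ m := Nat.cast_le.mpr h
      linarith
    push_cast
    rw [h1]
    field_simp
    ring
  · rw [if_neg h]
    by_cases h2 : k ≤ m + 1
    · rw [if_pos h2, if_pos h2]
      have hk : k = m + 1 := by omega
      subst hk
      simp
    · rw [if_neg h2, if_neg h2]; simp

lemma lemD (α : ℝ) (m : ℕ) :
    derivative (laguerre α (m + 1)) = -(laguerre (α + 1) m) := by
  ext k
  rw [Polynomial.coeff_derivative, Polynomial.coeff_neg, laguerre_coeff, laguerre_coeff]
  by_cases h : k ≤ m
  · rw [if_pos (by omega), if_pos h]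
    have e3 : ∏ j ∈ Finset.Icc (k + 1 + 1) (m + 1), (α + (j : ℝ))
        = ∏ j ∈ Finset.Icc (k + 1) m, (α + 1 + (j : ℝ)) := prod_shift _ _ _
    rw [e3]
    have hf : m + 1 - (k + 1) = m - k := by omega
    rw [hf, Nat.factorial_succ]
    have hk0 : (Nat.factorial k : ℝ) ≠ 0 := by positivity
    have hmk0 : (Nat.factorial (m - k) : ℝ) ≠ 0 := by positivity
    push_cast
    field_simp
    ring
  · rw [if_neg (by omega), if_neg h, neg_zero, zero_mul]


lemma lemA (α : ℝ) (m : ℕ) :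
    X * laguerre (α + 2) m =
      C (α + 1) * laguerre (α + 1) m - C ((m : ℝ) + 1) * laguerre α (m + 1) := by
  ext k
  rw [Polynomial.coeff_sub, Polynomial.coeff_C_mul, Polynomial.coeff_C_mul]
  cases k with
  | zero =>
    rw [Polynomial.mul_coeff_zero, Polynomial.coeff_X_zero, zero_mul,
      laguerre_coeff, laguerre_coeff, if_pos (by omega), if_pos (by omega)]
    have e2 : ∏ j ∈ Finset.Icc (0 + 1) (m + 1), (α + (j : ℝ))
        = (α + ((0:ℕ) + 1 : ℕ)) * ∏ j ∈ Finset.Icc (0 + 2) (m + 1), (α + (j : ℝ)) := by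
      rw [← Finset.insert_Icc_add_one_left_eq_Icc (by omega : 0 + 1 ≤ m + 1), Finset.prod_insert (by simp)]; rfl
    have e3 : ∏ j ∈ Finset.Icc (0 + 2) (m + 1), (α + (j : ℝ))
        = ∏ j ∈ Finset.Icc (0 + 1) m, (α + 1 + (j : ℝ)) := prod_shift _ _ _
    rw [show (0:ℕ) + 1 = 1 by rfl] at *
    rw [e2, e3]
    have hm0 : (Nat.factorial m : ℝ) ≠ 0 := by positivity
    rw [show m + 1 - 0 = (m - 0) + 1 by omega, Nat.factorial_succ, show m - 0 = m by omega]
    push_cast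
    field_simp
    ring
  | succ k =>
    rw [Polynomial.coeff_X_mul, laguerre_coeff, laguerre_coeff, laguerre_coeff]
    by_cases h : k + 1 ≤ m
    · rw [if_pos (by omega), if_pos (by omega), if_pos (by omega)]
      have e1 : ∏ j ∈ Finset.Icc (k + 1) m, (α + 2 + (j : ℝ))
          = ∏ j ∈ Finset.Icc (k + 3) (m + 2), (α + (j : ℝ)) := by
        rw [prod_shift (k+2) (m+1) α, prod_shift (k+1) m (α+1)]
        apply Finset.prod_congr rfl; intro j _; ring
      have e1b : ∏ j ∈ Finset.Icc (k + 3) (m + 2), (α + (j : ℝ))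
          = (α + ((m + 2 : ℕ) : ℝ)) * ∏ j ∈ Finset.Icc (k + 3) (m + 1), (α + (j : ℝ)) := by
        rw [Finset.prod_Icc_succ_top (by omega)]; ring
      have e2 : ∏ j ∈ Finset.Icc (k + 1 + 1) m, (α + 1 + (j : ℝ))
          = ∏ j ∈ Finset.Icc (k + 3) (m + 1), (α + (j : ℝ)) := by
        rw [prod_shift (k+2) m α]
      have e3 : ∏ j ∈ Finset.Icc (k + 1 + 1) (m + 1), (α + (j : ℝ))
          = (α + ((k + 2 : ℕ) : ℝ)) * ∏ j ∈ Finset.Icc (k + 3) (m + 1), (α + (j : ℝ)) := by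
        rw [← Finset.insert_Icc_add_one_left_eq_Icc (by omega : k + 2 ≤ m + 1), Finset.prod_insert (by simp)]; rfl
      rw [e1, e1b, e2, e3]
      have hf1 : m - k = (m - k - 1) + 1 := by omega
      have hf2 : m - (k + 1) = m - k - 1 := by omega
      have hf3 : m + 1 - (k + 1) = (m - k - 1) + 1 := by omega
      have F : (m - k).factorial = (m - k) * (m - k - 1).factorial := by
        rw [hf1, Nat.factorial_succ, ← hf1]
      have F2 : ((m - k - 1) + 1).factorial = (m - k) * (m - k - 1).factorial := by
        rw [← hf1, F]
      rw [hf2, hf3, F, F2, Nat.factorial_succ k]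
      have hmk : ((m - k : ℕ) : ℝ) = (m : ℝ) - k := by
        rw [Nat.cast_sub (by omega : k ≤ m)]
      have h1 : (Nat.factorial (m - k - 1) : ℝ) ≠ 0 := by positivity
      have h2 : (Nat.factorial k : ℝ) ≠ 0 := by positivity
      have h3 : ((m : ℝ) - k) ≠ 0 := by
        have : (k : ℝ) + 1 ≤ m := by exact_mod_cast Nat.cast_le.mpr h
        linarith
      have h4 : ((k : ℝ) + 1) ≠ 0 := by positivity
      push_cast
      rw [hmk]
      field_simp
      ring
    · by_cases h2 : k = m
      · subst h2
        rw [if_pos (le_refl _), if_neg (by omega), if_pos (by omega)]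
        rw [show Finset.Icc (k + 1) k = ∅ from Finset.Icc_eq_empty (by omega),
          show Finset.Icc (k + 1 + 1) (k + 1) = ∅ from Finset.Icc_eq_empty (by omega),
          Finset.prod_empty]
        rw [show k - k = 0 by omega, show k + 1 - (k + 1) = 0 by omega,
          Nat.factorial_zero, Nat.factorial_succ k]
        have h2' : (Nat.factorial k : ℝ) ≠ 0 := by positivity
        have h4 : ((k : ℝ) + 1) ≠ 0 := by positivity
        push_cast
        field_simp
        ring
      · rw [if_neg (by omega), if_neg (by omega), if_neg (by omega)]
        simp

lemma star (α : ℝ) (m : ℕ) (t : ℝ) :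
    t ^ 3 * (laguerre (α + 4) m).eval t =
      (-(((m : ℝ) + 1) * (t ^ 2 + (α + 3 - ((m : ℝ) + 1)) * t + (α + 2) * (α + 3)))) *
        (laguerre α (m + 1)).eval t +
      (-(((m : ℝ) + 1) * t ^ 2 + 2 * ((m : ℝ) + 1) * (α + 2) * t -
          (α + 1) * (α + 2) * (α + 3))) * (laguerre (α + 1) m).eval t := by
  have e1 := congrArg (eval t) (lemA α m)
  have e2 := congrArg (eval t) (lemA (α + 1) m)
  have e3 := congrArg (eval t) (lemA (α + 2) m)
  have e4 := congrArg (eval t) (lemR1 α m)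
  have e5 := congrArg (eval t) (lemR1 (α + 1) m)
  rw [show α + 1 + 2 = α + 3 by ring, show α + 1 + 1 = α + 2 by ring] at e2
  rw [show α + 2 + 2 = α + 4 by ring, show α + 2 + 1 = α + 3 by ring] at e3
  rw [show α + 1 + 1 = α + 2 by ring] at e5
  simp only [eval_mul, eval_add, eval_sub, eval_X, eval_C] at e1 e2 e3 e4 e5
  linear_combination t ^ 2 * e3 + ((α + 3) * t) * e2 +
    ((α + 2) * (α + 3) - ((m : ℝ) + 1) * t) * e1 +
    (-(((m : ℝ) + 1) * (α + 3) * t) - ((m : ℝ) + 1) * t ^ 2) * e4 +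
    (-(((m : ℝ) + 1) * t ^ 2)) * e5

lemma poly_eq_prod (p : Polynomial ℝ) (n : ℕ) (hn : 0 < n) (x : ℕ → ℝ)
    (hmono : ∀ i ∈ Finset.Icc 1 n, ∀ j ∈ Finset.Icc 1 n, i < j → x i < x j)
    (hroots : ∀ i ∈ Finset.Icc 1 n, p.eval (x i) = 0)
    (hcoeff : ∀ k, n < k → p.coeff k = 0) :
    p = C (p.coeff n) * ∏ i ∈ Finset.Icc 1 n, (X - C (x i)) := by
  classical
  set W : Polynomial ℝ := ∏ i ∈ Finset.Icc 1 n, (X - C (x i)) with hW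
  have hWmonic : W.Monic := monic_prod_of_monic _ _ fun i _ => monic_X_sub_C _
  have hWdeg : W.natDegree = n := by
    rw [hW, natDegree_prod_of_monic _ _ fun i _ => monic_X_sub_C _]
    simp [natDegree_X_sub_C]
  have hWn : W.coeff n = 1 := by
    have := hWmonic.coeff_natDegree
    rwa [hWdeg] at this
  have hinj : ∀ a ∈ Finset.Icc 1 n, ∀ b ∈ Finset.Icc 1 n, x a = x b → a = b := by
    intro a ha b hb hab
    rcases lt_trichotomy a b with h | h | h
    · exact absurd hab (ne_of_lt (hmono a ha b hb h))
    · exact h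
    · exact absurd hab.symm (ne_of_lt (hmono b hb a ha h))
  set s : Finset ℝ := (Finset.Icc 1 n).image x with hs
  have hcard : s.card = n := by
    rw [hs, Finset.card_image_of_injOn (fun a ha b hb => hinj a ha b hb), Nat.card_Icc]
    omega
  set D : Polynomial ℝ := p - C (p.coeff n) * W with hD
  have hDcoeff : ∀ k, n ≤ k → D.coeff k = 0 := by
    intro k hk
    rcases eq_or_lt_of_le hk with rfl | hk'
    · simp [hD, hWn]
    · have h1 : W.coeff k = 0 := coeff_eq_zero_of_natDegree_lt (by omega)
      simp [hD, h1, hcoeff k hk']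
  have hDdeg : D.natDegree < n := by
    rcases eq_or_ne D 0 with h | h
    · simp [h]; omega
    · by_contra hcon
      push_neg at hcon
      exact leadingCoeff_ne_zero.mpr h (hDcoeff _ hcon)
  have hDzero : D = 0 := by
    apply Polynomial.eq_zero_of_natDegree_lt_card_of_eval_eq_zero' D s
    · intro t ht
      rw [hs] at ht
      obtain ⟨i, hi, rfl⟩ := Finset.mem_image.mp ht
      have h1 : p.eval (x i) = 0 := hroots i hi
      have h2 : W.eval (x i) = 0 := by
        rw [hW, eval_prod]
        exact Finset.prod_eq_zero hi (by simp)
      simp [hD, h1, h2]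
    · rw [hcard]; exact hDdeg
  exact sub_eq_zero.mp hDzero

lemma eval_deriv_prod (n i : ℕ) (x : ℕ → ℝ) (hi : i ∈ Finset.Icc 1 n) :
    (derivative (∏ j ∈ Finset.Icc 1 n, (X - C (x j)))).eval (x i) =
      ∏ j ∈ (Finset.Icc 1 n).erase i, (x i - x j) := by
  classical
  rw [← Finset.mul_prod_erase _ _ hi, derivative_mul, derivative_X_sub_C, one_mul]
  simp [eval_prod]

lemma prod_neg_pow (s : Finset ℕ) (f : ℕ → ℝ) (h : ∀ j ∈ s, f j < 0) :
    0 < (-1 : ℝ) ^ s.card * ∏ j ∈ s, f j := by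
  classical
  induction s using Finset.induction_on with
  | empty => simp
  | @insert a s' ha ih =>
    rw [Finset.card_insert_of_notMem ha, Finset.prod_insert ha, pow_succ]
    have h1 := ih fun j hj => h j (Finset.mem_insert_of_mem hj)
    have h2 : f a < 0 := h a (Finset.mem_insert_self a s')
    nlinarith

lemma pi_sign (n i : ℕ) (x : ℕ → ℝ)
    (hmono : ∀ a ∈ Finset.Icc 1 n, ∀ b ∈ Finset.Icc 1 n, a < b → x a < x b)
    (hi : i ∈ Finset.Icc 1 n) :
    ∃ p : ℝ, 0 < p ∧ ∏ j ∈ (Finset.Icc 1 n).erase i, (x i - x j) = (-1) ^ (n - i) * p := by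
  classical
  have hi' := Finset.mem_Icc.mp hi
  have hsplit : (Finset.Icc 1 n).erase i = Finset.Icc 1 (i - 1) ∪ Finset.Icc (i + 1) n := by
    ext a; simp only [Finset.mem_erase, Finset.mem_Icc, Finset.mem_union]; omega
  have hdisj : Disjoint (Finset.Icc 1 (i - 1)) (Finset.Icc (i + 1) n) := by
    rw [Finset.disjoint_left]; intro a ha hb
    simp only [Finset.mem_Icc] at ha hb; omega
  rw [hsplit, Finset.prod_union hdisj]
  have h1 : 0 < ∏ j ∈ Finset.Icc 1 (i - 1), (x i - x j) := by
    apply Finset.prod_pos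
    intro j hj
    have hj' := Finset.mem_Icc.mp hj
    have := hmono j (Finset.mem_Icc.mpr ⟨hj'.1, by omega⟩) i hi (by omega)
    linarith
  have h2 : 0 < (-1 : ℝ) ^ (n - i) * ∏ j ∈ Finset.Icc (i + 1) n, (x i - x j) := by
    have hc : (Finset.Icc (i + 1) n).card = n - i := by rw [Nat.card_Icc]; omega
    rw [← hc]
    apply prod_neg_pow
    intro j hj
    have hj' := Finset.mem_Icc.mp hj
    have := hmono i hi j (Finset.mem_Icc.mpr ⟨by omega, hj'.2⟩) (by omega)
    linarith
  refine ⟨(∏ j ∈ Finset.Icc 1 (i - 1), (x i - x j)) *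
    ((-1 : ℝ) ^ (n - i) * ∏ j ∈ Finset.Icc (i + 1) n, (x i - x j)), mul_pos h1 h2, ?_⟩
  have hsq : ((-1 : ℝ) ^ (n - i)) * ((-1 : ℝ) ^ (n - i)) = 1 := by
    rw [← pow_add, ← two_mul, pow_mul]; norm_num
  linear_combination (-((∏ j ∈ Finset.Icc 1 (i - 1), (x i - x j)) *
    (∏ j ∈ Finset.Icc (i + 1) n, (x i - x j)))) * hsq

theorem laguerre_interlacing_deg_pred_param_four_of_root_outside
    (α : ℝ) (hα : -1 < α) (n : ℕ) (hn : 4 ≤ n)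
    (hnc : ∀ t : ℝ, ¬((laguerre (α + 4) (n - 1)).eval t = 0 ∧ (laguerre α n).eval t = 0))
    (x : ℕ → ℝ)
    (hxpos : ∀ i ∈ Finset.Icc 1 n, 0 < x i)
    (hxmono : ∀ i ∈ Finset.Icc 1 n, ∀ j ∈ Finset.Icc 1 n, i < j → x i < x j)
    (hxroots : ∀ t : ℝ, (laguerre α n).eval t = 0 ↔ ∃ i ∈ Finset.Icc 1 n, x i = t)
    (X : ℕ → ℝ)
    (hXpos : ∀ i ∈ Finset.Icc 1 (n - 1), 0 < X i)
    (hXmono : ∀ i ∈ Finset.Icc 1 (n - 1), ∀ j ∈ Finset.Icc 1 (n - 1), i < j → X i < X j)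
    (hXroots : ∀ t : ℝ, (laguerre (α + 4) (n - 1)).eval t = 0 ↔ ∃ i ∈ Finset.Icc 1 (n - 1), X i = t)
    (q : ℝ) (hqpos : 0 < q)
    (hqroot : (n : ℝ) * q ^ 2 + 2 * (n : ℝ) * (α + 2) * q - (α + 1) * (α + 2) * (α + 3) = 0)
    (hq : q < x 1 ∨ x n < q) :
    ∀ i ∈ Finset.Icc 1 (n - 1), x i < X i ∧ X i < x (i + 1) := by
  classical
  obtain ⟨m, rfl⟩ : ∃ m, n = m + 1 := ⟨n - 1, by omega⟩
  simp only [Nat.add_sub_cancel] at hnc hXpos hXmono hXroots ⊢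
  have hm : 3 ≤ m := by omega
  push_cast at hqroot
  -- basic root facts
  have hProots : ∀ i ∈ Finset.Icc 1 (m + 1), (laguerre α (m + 1)).eval (x i) = 0 :=
    fun i hi => (hxroots (x i)).mpr ⟨i, hi, rfl⟩
  have hPcoeff : ∀ k, m + 1 < k → (laguerre α (m + 1)).coeff k = 0 := by
    intro k hk; rw [laguerre_coeff, if_neg (by omega)]
  set c : ℝ := (laguerre α (m + 1)).coeff (m + 1) with hc
  have hc0 : c ≠ 0 := by
    rw [hc, laguerre_coeff, if_pos (le_refl _),
      Finset.Icc_eq_empty (by omega), Finset.prod_empty, Nat.sub_self, Nat.factorial_zero]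
    apply div_ne_zero
    · simpa using pow_ne_zero (m + 1) (by norm_num : (-1:ℝ) ≠ 0)
    · positivity
  have hfact := poly_eq_prod (laguerre α (m + 1)) (m + 1) (by omega) x hxmono hProots hPcoeff
  -- E i : value of derivative at x i
  set E : ℕ → ℝ := fun i => (derivative (laguerre α (m + 1))).eval (x i) with hE
  have hEval : ∀ i ∈ Finset.Icc 1 (m + 1),
      ∃ p : ℝ, 0 < p ∧ E i = c * ((-1) ^ (m + 1 - i) * p) := by
    intro i hi
    obtain ⟨p, hp, hpe⟩ := pi_sign (m + 1) i x hxmono hi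
    refine ⟨p, hp, ?_⟩
    rw [hE]
    simp only
    conv_lhs => rw [hfact]
    rw [derivative_C_mul, eval_mul, eval_C, eval_deriv_prod (m + 1) i x hi, hpe]
  -- the quadratic
  set g : ℝ → ℝ := fun t => ((m:ℝ) + 1) * t ^ 2 + 2 * ((m:ℝ) + 1) * (α + 2) * t -
      (α + 1) * (α + 2) * (α + 3) with hg
  have hgfac : ∀ t, g t = ((m:ℝ) + 1) * (t - q) * (t + q + 2 * (α + 2)) := by
    intro t; rw [hg]; simp only; linear_combination hqroot
  obtain ⟨σ, hσsq, hσg⟩ : ∃ σ : ℝ, σ * σ = 1 ∧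
      ∀ i ∈ Finset.Icc 1 (m + 1), 0 < σ * g (x i) := by
    rcases hq with h | h
    · refine ⟨1, by norm_num, fun i hi => ?_⟩
      have hx1 : q < x i := by
        rcases eq_or_lt_of_le (Finset.mem_Icc.mp hi).1 with h1 | h1
        · rw [← h1]; exact h
        · exact h.trans (hxmono 1 (Finset.mem_Icc.mpr ⟨le_refl _, by omega⟩) i hi h1)
      rw [one_mul, hgfac]
      have hxi := hxpos i hi
      apply mul_pos (mul_pos (by positivity) (by linarith)) (by linarith)
    · refine ⟨-1, by norm_num, fun i hi => ?_⟩
      have hx1 : x i < q := by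
        rcases eq_or_lt_of_le (Finset.mem_Icc.mp hi).2 with h1 | h1
        · rw [h1]; exact h
        · exact (hxmono i hi (m + 1) (Finset.mem_Icc.mpr ⟨by omega, le_refl _⟩) h1).trans h
      rw [hgfac]
      have hxi := hxpos i hi
      have : ((m:ℝ) + 1) * (x i - q) * (x i + q + 2 * (α + 2)) < 0 := by
        apply mul_neg_of_neg_of_pos _ (by linarith)
        apply mul_neg_of_pos_of_neg (by positivity) (by linarith)
      linarith
  -- star evaluated at roots
  have hstar : ∀ i ∈ Finset.Icc 1 (m + 1),
      (x i) ^ 3 * (laguerre (α + 4) m).eval (x i) = g (x i) * E i := by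
    intro i hi
    have h1 := star α m (x i)
    rw [hProots i hi, mul_zero, zero_add] at h1
    have h2 : (laguerre (α + 1) m).eval (x i) = -(E i) := by
      rw [hE]; simp only [lemD α m, eval_neg, neg_neg]
    rw [h2] at h1
    rw [h1, hg]
    ring
  -- sign alternation
  have hkey : ∀ i ∈ Finset.Icc 1 m,
      (laguerre (α + 4) m).eval (x i) * (laguerre (α + 4) m).eval (x (i + 1)) < 0 := by
    intro i hi
    have hi' := Finset.mem_Icc.mp hi
    have hmem1 : i ∈ Finset.Icc 1 (m + 1) := Finset.mem_Icc.mpr ⟨hi'.1, by omega⟩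
    have hmem2 : i + 1 ∈ Finset.Icc 1 (m + 1) := Finset.mem_Icc.mpr ⟨by omega, by omega⟩
    obtain ⟨p1, hp1, he1⟩ := hEval i hmem1
    obtain ⟨p2, hp2, he2⟩ := hEval (i + 1) hmem2
    have hEE : E i * E (i + 1) < 0 := by
      rw [he1, he2]
      have hsq' : ((-1:ℝ) ^ (m + 1 - (i + 1))) ^ 2 = 1 := by
        rw [← pow_mul, mul_comm, pow_mul]; norm_num
      have hpow : (-1 : ℝ) ^ (m + 1 - i) * (-1) ^ (m + 1 - (i + 1)) = -1 := by
        rw [show m + 1 - i = (m + 1 - (i + 1)) + 1 by omega, pow_succ]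
        linear_combination -hsq'
      have heq : c * ((-1:ℝ) ^ (m + 1 - i) * p1) * (c * ((-1) ^ (m + 1 - (i + 1)) * p2)) =
          -(c * c * (p1 * p2)) := by
        linear_combination (c * c * p1 * p2) * hpow
      rw [heq]
      have hpos : 0 < c * c * (p1 * p2) := mul_pos (mul_self_pos.mpr hc0) (mul_pos hp1 hp2)
      linarith
    have hgg : 0 < g (x i) * g (x (i + 1)) := by
      have h1 := hσg i hmem1
      have h2 := hσg (i + 1) hmem2
      nlinarith
    have hs1 := hstar i hmem1
    have hs2 := hstar (i + 1) hmem2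
    have hx1 : 0 < x i := hxpos i hmem1
    have hx2 : 0 < x (i + 1) := hxpos (i + 1) hmem2
    by_contra hcon
    push_neg at hcon
    have h3 : 0 ≤ ((x i) ^ 3 * (x (i + 1)) ^ 3) *
        ((laguerre (α + 4) m).eval (x i) * (laguerre (α + 4) m).eval (x (i + 1))) :=
      mul_nonneg (by positivity) hcon
    have h4 : ((x i) ^ 3 * (laguerre (α + 4) m).eval (x i)) *
        ((x (i + 1)) ^ 3 * (laguerre (α + 4) m).eval (x (i + 1))) =
        (g (x i) * g (x (i + 1))) * (E i * E (i + 1)) := by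
      rw [hs1, hs2]; ring
    have h5 : ((x i) ^ 3 * (laguerre (α + 4) m).eval (x i)) *
        ((x (i + 1)) ^ 3 * (laguerre (α + 4) m).eval (x (i + 1))) =
        ((x i) ^ 3 * (x (i + 1)) ^ 3) *
        ((laguerre (α + 4) m).eval (x i) * (laguerre (α + 4) m).eval (x (i + 1))) := by ring
    have h6 : (g (x i) * g (x (i + 1))) * (E i * E (i + 1)) < 0 :=
      mul_neg_of_pos_of_neg hgg hEE
    linarith
  -- IVT: a zero of laguerre (α+4) m in each gap
  have hIVT : ∀ i ∈ Finset.Icc 1 m, ∃ j ∈ Finset.Icc 1 m, x i < X j ∧ X j < x (i + 1) := by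
    intro i hi
    have hi' := Finset.mem_Icc.mp hi
    have hmem1 : i ∈ Finset.Icc 1 (m + 1) := Finset.mem_Icc.mpr ⟨hi'.1, by omega⟩
    have hmem2 : i + 1 ∈ Finset.Icc 1 (m + 1) := Finset.mem_Icc.mpr ⟨by omega, by omega⟩
    have hlt : x i < x (i + 1) := hxmono i hmem1 (i + 1) hmem2 (by omega)
    have hcont : ContinuousOn (fun t => (laguerre (α + 4) m).eval t)
        (Set.Icc (x i) (x (i + 1))) :=
      (Polynomial.continuous (laguerre (α + 4) m)).continuousOn
    have hk := hkey i hi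
    rcases lt_or_ge ((laguerre (α + 4) m).eval (x i)) 0 with hneg | hge
    · have hpos2 : 0 < (laguerre (α + 4) m).eval (x (i + 1)) := by nlinarith
      obtain ⟨t, ht, htz⟩ := intermediate_value_Ioo hlt.le hcont
        (Set.mem_Ioo.mpr ⟨hneg, hpos2⟩)
      obtain ⟨j, hjm, rfl⟩ := (hXroots t).mp htz
      exact ⟨j, hjm, ht.1, ht.2⟩
    · have hpos1 : 0 < (laguerre (α + 4) m).eval (x i) := by
        rcases eq_or_lt_of_le hge with h | h
        · exfalso; rw [← h] at hk; simp at hk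
        · exact h
      have hneg2 : (laguerre (α + 4) m).eval (x (i + 1)) < 0 := by nlinarith
      obtain ⟨t, ht, htz⟩ := intermediate_value_Ioo' hlt.le hcont
        (Set.mem_Ioo.mpr ⟨hneg2, hpos1⟩)
      obtain ⟨j, hjm, rfl⟩ := (hXroots t).mp htz
      exact ⟨j, hjm, ht.1, ht.2⟩
  -- choose the index of the zero in each gap
  have hchoice : ∀ i : ℕ, ∃ jj : ℕ, i ∈ Finset.Icc 1 m →
      jj ∈ Finset.Icc 1 m ∧ x i < X jj ∧ X jj < x (i + 1) := by
    intro i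
    by_cases hi : i ∈ Finset.Icc 1 m
    · obtain ⟨jj, hjj, h1, h2⟩ := hIVT i hi
      exact ⟨jj, fun _ => ⟨hjj, h1, h2⟩⟩
    · exact ⟨1, fun h => absurd h hi⟩
  choose j hj using hchoice
  have hjmono : ∀ a ∈ Finset.Icc 1 m, ∀ b ∈ Finset.Icc 1 m, a < b → j a < j b := by
    intro a ha b hb hab
    obtain ⟨hja, hxa1, hxa2⟩ := hj a ha
    obtain ⟨hjb, hxb1, hxb2⟩ := hj b hb
    have ha' := Finset.mem_Icc.mp ha
    have hb' := Finset.mem_Icc.mp hb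
    have h1 : x (a + 1) ≤ x b := by
      rcases eq_or_lt_of_le (show a + 1 ≤ b by omega) with h | h
      · rw [h]
      · exact le_of_lt (hxmono (a + 1) (Finset.mem_Icc.mpr ⟨by omega, by omega⟩) b
          (Finset.mem_Icc.mpr ⟨by omega, by omega⟩) h)
    have h2 : X (j a) < X (j b) := by linarith
    by_contra hcon
    push_neg at hcon
    rcases eq_or_lt_of_le hcon with h | h
    · rw [h] at h2; exact lt_irrefl _ h2
    · exact absurd h2 (not_lt.mpr (le_of_lt (hXmono (j b) hjb (j a) hja h)))
  have hstep : ∀ k a, 1 ≤ a → a + k ≤ m → j a + k ≤ j (a + k) := by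
    intro k
    induction k with
    | zero => intro a _ _; simp
    | succ k ih =>
      intro a h1 h2
      have h3 := ih a h1 (by omega)
      have h4 : j (a + k) < j (a + k + 1) :=
        hjmono (a + k) (Finset.mem_Icc.mpr ⟨by omega, by omega⟩) (a + k + 1)
          (Finset.mem_Icc.mpr ⟨by omega, by omega⟩) (by omega)
      have h5 : a + (k + 1) = a + k + 1 := by omega
      rw [h5]
      omega
  have hlow : ∀ i, 1 ≤ i → i ≤ m → i ≤ j i := by
    intro i h1 h2
    have h3 : 1 ≤ j 1 :=
      (Finset.mem_Icc.mp (hj 1 (Finset.mem_Icc.mpr ⟨le_refl _, by omega⟩)).1).1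
    have h4 := hstep (i - 1) 1 (le_refl 1) (by omega)
    rw [show 1 + (i - 1) = i by omega] at h4
    omega
  have hhigh : ∀ i, 1 ≤ i → i ≤ m → j i ≤ i := by
    intro i h1 h2
    have h3 : j m ≤ m :=
      (Finset.mem_Icc.mp (hj m (Finset.mem_Icc.mpr ⟨by omega, le_refl _⟩)).1).2
    have h4 := hstep (m - i) i h1 (by omega)
    rw [show i + (m - i) = m by omega] at h4
    omega
  intro i hi
  have hi' := Finset.mem_Icc.mp hi
  have hji : j i = i := le_antisymm (hhigh i hi'.1 hi'.2) (hlow i hi'.1 hi'.2)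
  obtain ⟨_, h1, h2⟩ := hj i hi
  rw [hji] at h1 h2
  exact ⟨h1, h2⟩
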